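/- For any hypergraph H and edge e ∈ E(H), |E(H) - E(H - e)| ≤ 2|e| - 2, where H - e is the hypergraph obtained by deleting the edge e. -/

import Mathlib

open Matrix BigOperators

set_option linter.unusedSectionVars false

variable {V : Type*} [Fintype V] [DecidableEq V]

/-- Adjacency matrix of a (multi-)hypergraph given by its multiset of edges:
entry `(i,j)` is the number of edges containing both `i` and `j`, with zero diagonal. -/
def adjacencyMatrix (E : Multiset (Finset V)) : Matrix V V ℝ :=
  Matrix.of fun i j => if i = j then 0 else ((E.filter (fun e => i ∈ e ∧ j ∈ e)).card : ℝ)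

lemma adjacency_isHermitian (E : Multiset (Finset V)) : (adjacencyMatrix E).IsHermitian := by
  unfold Matrix.IsHermitian
  ext i j
  by_cases h : i = j
  · subst h; simp [adjacencyMatrix]
  · simp only [adjacencyMatrix, Matrix.conjTranspose_apply, Matrix.of_apply, h, Ne.symm h,
      if_false, star_trivial]
    congr 1
    exact congrArg Multiset.card (Multiset.filter_congr (fun e _ => and_comm))

/-- Energy of a (multi-)hypergraph: sum of the absolute values of the adjacency eigenvalues. -/
noncomputable def energy (E : Multiset (Finset V)) : ℝ :=
  ∑ i, |(adjacency_isHermitian E).eigenvalues i|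

/-- Degree of a vertex: the number of edges containing it. -/
def hdegree (E : Multiset (Finset V)) (v : V) : ℕ := (E.filter (fun e => v ∈ e)).card

/-- Zagreb index: sum of squares of vertex degrees. -/
def zagreb (E : Multiset (Finset V)) : ℕ := ∑ v, (hdegree E v)^2

lemma col_sq_sum {M : Matrix V V ℝ} (hM : star M * M = 1) (j : V) :
    ∑ i, (M i j)^2 = 1 := by
  have := congrFun (congrFun hM j) j
  simp only [Matrix.mul_apply, Matrix.star_apply, star_trivial, Matrix.one_apply_eq] at this
  calc ∑ i, (M i j)^2 = ∑ i, M i j * M i j := by simp [pow_two]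
  _ = 1 := this

lemma key1 (U W : Matrix V V ℝ) (hU : U ∈ Matrix.unitaryGroup V ℝ)
    (hW : W ∈ Matrix.unitaryGroup V ℝ) (s μ : V → ℝ) (hs : ∀ i, |s i| ≤ 1) :
    |Matrix.trace (U * Matrix.diagonal s * star U * (W * Matrix.diagonal μ * star W))| ≤
      ∑ j, |μ j| := by
  set M := star U * W with hMdef
  have hUU : U * star U = 1 := (Matrix.mem_unitaryGroup_iff).mp hU
  have hUU' : star U * U = 1 := (Matrix.mem_unitaryGroup_iff').mp hU
  have hM : star M * M = 1 := by
    have h2 : star W * W = 1 := (Matrix.mem_unitaryGroup_iff').mp hW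
    calc star M * M = star W * (U * star U) * W := by
          simp [hMdef, Matrix.star_mul, Matrix.mul_assoc]
    _ = 1 := by rw [hUU, Matrix.mul_one, h2]
  have hWs : star M * star U = star W := by
    rw [hMdef, Matrix.star_mul, star_star, Matrix.mul_assoc, hUU, Matrix.mul_one]
  have htr : Matrix.trace (U * Matrix.diagonal s * star U * (W * Matrix.diagonal μ * star W))
      = Matrix.trace (Matrix.diagonal s * M * Matrix.diagonal μ * star M) := by
    have h3 : U * Matrix.diagonal s * star U * (W * Matrix.diagonal μ * star W)
        = U * (Matrix.diagonal s * M * Matrix.diagonal μ * star M) * star U := by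
      rw [← hWs, hMdef]
      simp only [Matrix.mul_assoc]
    rw [h3, Matrix.trace_mul_cycle, ← Matrix.mul_assoc, hUU', Matrix.one_mul]
  rw [htr]
  have hentry : ∀ i j : V, (Matrix.diagonal s * M * Matrix.diagonal μ) i j
      = s i * M i j * μ j := by
    intro i j
    rw [Matrix.mul_diagonal, Matrix.diagonal_mul]
  have hform : Matrix.trace (Matrix.diagonal s * M * Matrix.diagonal μ * star M)
      = ∑ i, ∑ j, s i * (M i j)^2 * μ j := by
    simp only [Matrix.trace, Matrix.diag, Matrix.mul_apply, hentry, Matrix.star_apply,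
      star_trivial]
    refine Finset.sum_congr rfl fun i _ => Finset.sum_congr rfl fun j _ => ?_
    ring
  rw [hform]
  calc |∑ i, ∑ j, s i * (M i j)^2 * μ j|
      ≤ ∑ i, |∑ j, s i * (M i j)^2 * μ j| := Finset.abs_sum_le_sum_abs _ _
    _ ≤ ∑ i, ∑ j, |s i * (M i j)^2 * μ j| :=
        Finset.sum_le_sum fun i _ => Finset.abs_sum_le_sum_abs _ _
    _ ≤ ∑ i, ∑ j, (M i j)^2 * |μ j| := by
        refine Finset.sum_le_sum fun i _ => Finset.sum_le_sum fun j _ => ?_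
        rw [abs_mul, abs_mul, abs_pow, sq_abs]
        calc |s i| * (M i j)^2 * |μ j| ≤ 1 * (M i j)^2 * |μ j| := by
              apply mul_le_mul_of_nonneg_right _ (abs_nonneg _)
              exact mul_le_mul_of_nonneg_right (hs i) (sq_nonneg _)
        _ = (M i j)^2 * |μ j| := by ring
    _ = ∑ j, (∑ i, (M i j)^2) * |μ j| := by
        rw [Finset.sum_comm]
        exact Finset.sum_congr rfl fun j _ => (Finset.sum_mul _ _ _).symm
    _ = ∑ j, |μ j| := by
        refine Finset.sum_congr rfl fun j _ => ?_
        rw [col_sq_sum hM j, one_mul]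

lemma key2gen (U : Matrix V V ℝ) (hU : U ∈ Matrix.unitaryGroup V ℝ) (s t : V → ℝ) :
    Matrix.trace (U * Matrix.diagonal s * star U * (U * Matrix.diagonal t * star U))
      = ∑ i, s i * t i := by
  have hUU' : star U * U = 1 := (Matrix.mem_unitaryGroup_iff').mp hU
  have h : U * Matrix.diagonal s * star U * (U * Matrix.diagonal t * star U)
      = U * (Matrix.diagonal s * Matrix.diagonal t) * star U := by
    calc U * Matrix.diagonal s * star U * (U * Matrix.diagonal t * star U)
        = U * (Matrix.diagonal s * ((star U * U) * (Matrix.diagonal t * star U))) := by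
          simp only [Matrix.mul_assoc]
      _ = _ := by rw [hUU', Matrix.one_mul]; simp only [Matrix.mul_assoc]
  rw [h, Matrix.trace_mul_cycle, ← Matrix.mul_assoc, hUU', Matrix.one_mul,
    Matrix.diagonal_mul_diagonal, Matrix.trace_diagonal]

lemma diag_ofReal {A : Matrix V V ℝ} (hA : A.IsHermitian) :
    Matrix.diagonal (RCLike.ofReal ∘ hA.eigenvalues) = Matrix.diagonal hA.eigenvalues := by
  rw [RCLike.ofReal_real_eq_id, Function.id_comp]

lemma sum_eig {A : Matrix V V ℝ} (hA : A.IsHermitian) :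
    ∑ i, hA.eigenvalues i = Matrix.trace A := by
  conv_rhs => rw [hA.spectral_theorem, diag_ofReal hA, Unitary.conjStarAlgAut_apply]
  rw [Matrix.trace_mul_cycle,
    (Matrix.mem_unitaryGroup_iff').mp (hA.eigenvectorUnitary).2, Matrix.one_mul,
    Matrix.trace_diagonal]

lemma sum_sq_eig {A : Matrix V V ℝ} (hA : A.IsHermitian) :
    ∑ i, (hA.eigenvalues i)^2 = Matrix.trace (A * A) := by
  conv_rhs => rw [hA.spectral_theorem, diag_ofReal hA, Unitary.conjStarAlgAut_apply]
  rw [key2gen _ (hA.eigenvectorUnitary).2]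
  exact Finset.sum_congr rfl fun i _ => (pow_two _)

lemma sign_mul_self' (x : ℝ) : Real.sign x * x = |x| := by
  rcases lt_trichotomy x 0 with h | h | h
  · rw [Real.sign_of_neg h, abs_of_neg h]; ring
  · simp [h]
  · rw [Real.sign_of_pos h, abs_of_pos h]; ring

lemma abs_sign_le (x : ℝ) : |Real.sign x| ≤ 1 := by
  rcases lt_trichotomy x 0 with h | h | h
  · rw [Real.sign_of_neg h]; simp
  · simp [h, Real.sign_zero]
  · rw [Real.sign_of_pos h]; simp

/-- The "sign matrix" of a Hermitian real matrix. -/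
noncomputable def signM {A : Matrix V V ℝ} (hA : A.IsHermitian) : Matrix V V ℝ :=
  (hA.eigenvectorUnitary : Matrix V V ℝ) *
    Matrix.diagonal (fun i => Real.sign (hA.eigenvalues i)) *
    star (hA.eigenvectorUnitary : Matrix V V ℝ)

lemma trace_signM_self {A : Matrix V V ℝ} (hA : A.IsHermitian) :
    Matrix.trace (signM hA * A) = ∑ i, |hA.eigenvalues i| := by
  have h := congrArg (fun X => Matrix.trace (signM hA * X)) hA.spectral_theorem
  simp only [Unitary.conjStarAlgAut_apply, Unitary.coe_star] at h
  rw [h, diag_ofReal hA, signM, key2gen _ (hA.eigenvectorUnitary).2]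
  exact Finset.sum_congr rfl fun i _ => sign_mul_self' _

lemma abs_trace_signM_le {A B : Matrix V V ℝ} (hA : A.IsHermitian) (hB : B.IsHermitian) :
    |Matrix.trace (signM hA * B)| ≤ ∑ i, |hB.eigenvalues i| := by
  have h := congrArg (fun X => |Matrix.trace (signM hA * X)|) hB.spectral_theorem
  simp only [Unitary.conjStarAlgAut_apply, Unitary.coe_star] at h
  rw [h, diag_ofReal hB]
  exact key1 _ _ (hA.eigenvectorUnitary).2 (hB.eigenvectorUnitary).2 _ _
    (fun i => abs_sign_le _)

/-- trace-norm triangle-type bound for a difference. -/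
lemma abs_sub_tnorm_le {A B C : Matrix V V ℝ} (hA : A.IsHermitian) (hB : B.IsHermitian)
    (hC : C.IsHermitian) (h : A = B + C) :
    abs ((∑ i, |hA.eigenvalues i|) - ∑ i, |hB.eigenvalues i|) ≤ ∑ i, |hC.eigenvalues i| := by
  rw [abs_sub_le_iff]
  constructor
  · have h1 : (∑ i, |hA.eigenvalues i|) = Matrix.trace (signM hA * B) +
        Matrix.trace (signM hA * C) := by
      rw [← trace_signM_self hA, ← Matrix.trace_add, ← Matrix.mul_add, ← h]
    rw [h1]
    have := abs_trace_signM_le hA hB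
    have := abs_trace_signM_le hA hC
    have hb := abs_le.mp (abs_trace_signM_le hA hB)
    have hc := abs_le.mp (abs_trace_signM_le hA hC)
    linarith [hb.2, hc.2]
  · have h1 : (∑ i, |hB.eigenvalues i|) = Matrix.trace (signM hB * A) -
        Matrix.trace (signM hB * C) := by
      rw [← trace_signM_self hB, ← Matrix.trace_sub, ← Matrix.mul_sub, h]
      congr 1
      rw [add_sub_cancel_right]
    rw [h1]
    have ha := abs_le.mp (abs_trace_signM_le hB hA)
    have hc := abs_le.mp (abs_trace_signM_le hB hC)
    linarith [ha.2, hc.1]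


lemma adjacencyMatrix_add (a b : Multiset (Finset V)) :
    adjacencyMatrix (a + b) = adjacencyMatrix a + adjacencyMatrix b := by
  ext i j
  by_cases h : i = j <;> simp [adjacencyMatrix, h, Multiset.filter_add]

section edgeMatrix

variable (e : Finset V)

/-- indicator vector of the edge -/
def indic : V → ℝ := fun i => if i ∈ e then 1 else 0

lemma indic_sq (i : V) : indic e i * indic e i = indic e i := by
  by_cases h : i ∈ e <;> simp [indic, h]

lemma indic_sum : ∑ i, indic e i = (e.card : ℝ) := by
  simp [indic, Finset.sum_ite_mem]

lemma edge_apply (i j : V) :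
    adjacencyMatrix ({e} : Multiset (Finset V)) i j
      = if i = j then 0 else indic e i * indic e j := by
  by_cases h : i = j
  · simp [adjacencyMatrix, h]
  · by_cases hi : i ∈ e <;> by_cases hj : j ∈ e <;>
      simp [adjacencyMatrix, h, indic, hi, hj, Multiset.filter_singleton]

lemma edge_trace : Matrix.trace (adjacencyMatrix ({e} : Multiset (Finset V))) = 0 := by
  simp [Matrix.trace, Matrix.diag, edge_apply]

lemma edge_trace_sq :
    Matrix.trace (adjacencyMatrix ({e} : Multiset (Finset V)) *
      adjacencyMatrix ({e} : Multiset (Finset V)))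
      = (e.card : ℝ)^2 - (e.card : ℝ) := by
  have hterm : ∀ x j : V, adjacencyMatrix ({e} : Multiset (Finset V)) x j *
      adjacencyMatrix ({e} : Multiset (Finset V)) j x
      = indic e x * indic e j - (if x = j then indic e x else 0) := by
    intro x j
    by_cases h : x = j
    · subst h; simp [edge_apply, indic_sq]
    · rw [edge_apply, edge_apply, if_neg h, if_neg (Ne.symm h), if_neg h]
      calc indic e x * indic e j * (indic e j * indic e x)
          = (indic e x * indic e x) * (indic e j * indic e j) := by ring
        _ = indic e x * indic e j - 0 := by rw [indic_sq, indic_sq, sub_zero]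
  simp only [Matrix.trace, Matrix.diag, Matrix.mul_apply, hterm]
  rw [Finset.sum_congr rfl (fun x _ => Finset.sum_sub_distrib _ _)]
  rw [Finset.sum_sub_distrib]
  have h1 : ∀ x : V, ∑ j, indic e x * indic e j = indic e x * (e.card : ℝ) := by
    intro x; rw [← Finset.mul_sum, indic_sum]
  have h2 : ∀ x : V, (∑ j, if x = j then indic e x else 0) = indic e x := by
    intro x; simp
  rw [Finset.sum_congr rfl (fun x _ => h1 x), Finset.sum_congr rfl (fun x _ => h2 x),
    ← Finset.sum_mul, indic_sum]
  ring

lemma edge_eigenvalue_cases (i : V) :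
    (adjacency_isHermitian ({e} : Multiset (Finset V))).eigenvalues i = 0 ∨
    (adjacency_isHermitian ({e} : Multiset (Finset V))).eigenvalues i = -1 ∨
    (adjacency_isHermitian ({e} : Multiset (Finset V))).eigenvalues i = (e.card : ℝ) - 1 := by
  set hD := adjacency_isHermitian ({e} : Multiset (Finset V)) with hDdef
  set lam := hD.eigenvalues i with hlam
  set v : V → ℝ := ⇑(hD.eigenvectorBasis i) with hvdef
  have hv : adjacencyMatrix ({e} : Multiset (Finset V)) *ᵥ v = lam • v :=
    hD.mulVec_eigenvectorBasis i
  have hvne : ∃ x, v x ≠ 0 := by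
    by_contra hcon
    push_neg at hcon
    apply hD.eigenvectorBasis.orthonormal.ne_zero i
    ext x
    exact hcon x
  set t := ∑ j, indic e j * v j with htdef
  have E1 : ∀ x, indic e x * t - indic e x * v x = lam * v x := by
    intro x
    have hx := congrFun hv x
    rw [Matrix.mulVec, dotProduct] at hx
    have hrow : ∑ j, adjacencyMatrix ({e} : Multiset (Finset V)) x j * v j
        = indic e x * t - indic e x * v x := by
      have : ∀ j, adjacencyMatrix ({e} : Multiset (Finset V)) x j * v j
          = indic e x * (indic e j * v j) - (if x = j then indic e x * v x else 0) := by
        intro j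
        by_cases h : x = j
        · subst h
          rw [edge_apply, if_pos rfl, zero_mul, if_pos rfl]
          have h2 : indic e x * (indic e x * v x) = indic e x * v x := by
            rw [← mul_assoc, indic_sq]
          rw [h2]
          ring
        · simp [edge_apply, h]; ring
      rw [Finset.sum_congr rfl (fun j _ => this j), Finset.sum_sub_distrib, ← Finset.mul_sum,
        ← htdef]
      congr 1
      simp
    rw [hrow] at hx
    rw [hx]
    simp [Pi.smul_apply, smul_eq_mul]
  have E2 : ((e.card : ℝ) - 1) * t = lam * t := by
    have hsum : ∑ x, indic e x * (indic e x * t - indic e x * v x)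
        = ∑ x, indic e x * (lam * v x) := by
      exact Finset.sum_congr rfl fun x _ => by rw [E1 x]
    have hL : ∑ x, indic e x * (indic e x * t - indic e x * v x)
        = (e.card : ℝ) * t - t := by
      have : ∀ x, indic e x * (indic e x * t - indic e x * v x)
          = indic e x * t - indic e x * v x := by
        intro x
        have h2 := indic_sq e x
        calc indic e x * (indic e x * t - indic e x * v x)
            = (indic e x * indic e x) * t - (indic e x * indic e x) * v x := by ring
          _ = _ := by rw [h2]
      rw [Finset.sum_congr rfl (fun x _ => this x), Finset.sum_sub_distrib, ← Finset.sum_mul,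
        indic_sum, ← htdef]
    have hR : ∑ x, indic e x * (lam * v x) = lam * t := by
      rw [htdef, Finset.mul_sum]
      exact Finset.sum_congr rfl fun x _ => by ring
    rw [hL, hR] at hsum
    linarith [hsum]
  by_cases ht : t = 0
  · -- lam = 0 or lam = -1
    by_cases h0 : lam = 0
    · exact Or.inl h0
    by_cases h1 : lam = -1
    · exact Or.inr (Or.inl h1)
    exfalso
    obtain ⟨x, hx⟩ := hvne
    have := E1 x
    rw [ht, mul_zero, zero_sub] at this
    by_cases hxe : x ∈ e
    · have hu : indic e x = 1 := by simp [indic, hxe]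
      rw [hu, one_mul] at this
      apply h1
      have : v x * (lam + 1) = 0 := by linarith
      rcases mul_eq_zero.mp this with h | h
      · exact absurd h hx
      · linarith
    · have hu : indic e x = 0 := by simp [indic, hxe]
      rw [hu, zero_mul, neg_zero] at this
      rcases mul_eq_zero.mp this.symm with h | h
      · exact absurd h h0
      · exact absurd h hx
  · right; right
    have := mul_right_cancel₀ ht E2
    linarith

end edgeMatrix

lemma edge_tnorm (e : Finset V) (hk : 2 ≤ e.card) :
    ∑ i, |(adjacency_isHermitian ({e} : Multiset (Finset V))).eigenvalues i|
      = 2 * (e.card : ℝ) - 2 := by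
  set k : ℝ := (e.card : ℝ) with hkdef
  have hk2 : (2 : ℝ) ≤ k := by rw [hkdef]; exact_mod_cast hk
  have hk0 : k ≠ 0 := by linarith
  set ev := (adjacency_isHermitian ({e} : Multiset (Finset V))).eigenvalues with hevdef
  have hpt : ∀ i, |ev i| = (2 / k) * (ev i)^2 + (2 / k - 1) * ev i := by
    intro i
    rcases edge_eigenvalue_cases e i with h | h | h
    · rw [← hevdef] at h
      rw [h]; simp
    · rw [← hevdef] at h
      rw [h]
      rw [abs_neg, abs_one]
      ring
    · rw [← hevdef] at h
      rw [h, abs_of_nonneg (by linarith : (0:ℝ) ≤ k - 1)]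
      field_simp
      ring
  have hsum0 : ∑ i, ev i = 0 := by
    rw [hevdef, sum_eig, edge_trace]
  have hsum2 : ∑ i, (ev i)^2 = k^2 - k := by
    rw [hevdef, sum_sq_eig, edge_trace_sq]
  calc ∑ i, |ev i| = ∑ i, ((2 / k) * (ev i)^2 + (2 / k - 1) * ev i) :=
        Finset.sum_congr rfl fun i _ => hpt i
    _ = (2 / k) * (∑ i, (ev i)^2) + (2 / k - 1) * ∑ i, ev i := by
        rw [Finset.sum_add_distrib, Finset.mul_sum, Finset.mul_sum]
    _ = (2 / k) * (k^2 - k) := by rw [hsum0, hsum2]; ring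
    _ = 2 * k - 2 := by field_simp


/-- deleting an edge `e` changes the energy by at most `2|e| - 2`. -/
theorem stmt_12 (E : Finset (Finset V)) (hcard : ∀ e ∈ E, 2 ≤ e.card)
    (e : Finset V) (he : e ∈ E) :
    |energy E.val - energy ((E.erase e).val)| ≤ 2 * (e.card : ℝ) - 2 := by
  have hm : (E.erase e).val + ({e} : Multiset (Finset V)) = E.val := by
    rw [Finset.erase_val, add_comm, Multiset.singleton_add,
      Multiset.cons_erase (Finset.mem_def.mp he)]
  have h : adjacencyMatrix E.val
      = adjacencyMatrix (E.erase e).val + adjacencyMatrix ({e} : Multiset (Finset V)) := by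
    rw [← adjacencyMatrix_add, hm]
  have key := abs_sub_tnorm_le (adjacency_isHermitian E.val)
    (adjacency_isHermitian (E.erase e).val)
    (adjacency_isHermitian ({e} : Multiset (Finset V))) h
  rw [edge_tnorm e (hcard e he)] at key
  exact key
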